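/- Every ideal of the group algebra F[G] of a cyclic p-group G over a field F of characteristic p is a power of the augmentation ideal I; in particular the ideals of F[G] are totally ordered: F[G] = I^0 ⊋ I ⊋ I^2 ⊋ ⋯ ⊋ I^{|G|} = 0. -/

import Mathlib

open MonoidAlgebra Finset
set_option linter.unusedSectionVars false

/-- The augmentation ideal of `F[G]`. -/
noncomputable def augIdeal (F : Type*) [CommRing F] (G : Type*) [CommGroup G] :
    Ideal (MonoidAlgebra F G) :=
  Ideal.span {x | ∃ g : G, x = MonoidAlgebra.single g 1 - 1}

lemma gpow (q : ℕ) (k : ℕ) :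
    (Multiplicative.ofAdd (1 : ZMod q)) ^ k = Multiplicative.ofAdd ((k : ZMod q)) := by
  induction k with
  | zero => simp
  | succ k ih => rw [pow_succ, ih, ← ofAdd_add]; push_cast; ring_nf

lemma gsurj (q : ℕ) [NeZero q] (h : Multiplicative (ZMod q)) :
    ∃ k : ℕ, h = (Multiplicative.ofAdd (1 : ZMod q)) ^ k := by
  refine ⟨(Multiplicative.toAdd h).val, ?_⟩
  rw [gpow, ZMod.natCast_val, ZMod.cast_id]
  simp

section Aux
variable (F : Type*) [Field F] (q : ℕ) [NeZero q]

/-- The canonical generator of the augmentation ideal. -/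
noncomputable def tg : MonoidAlgebra F (Multiplicative (ZMod q)) :=
  MonoidAlgebra.single (Multiplicative.ofAdd (1 : ZMod q)) 1 - 1

lemma charP_MA (p : ℕ) [CharP F p] : CharP (MonoidAlgebra F (Multiplicative (ZMod q))) p := by
  refine charP_of_injective_algebraMap (R := F) ?_ p
  intro a b hab
  simp only [MonoidAlgebra.coe_algebraMap, Function.comp] at hab
  exact MonoidAlgebra.single_right_injective hab

lemma single_sub_one_mem (h : Multiplicative (ZMod q)) :
    (MonoidAlgebra.single h 1 - 1 : MonoidAlgebra F (Multiplicative (ZMod q))) ∈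
      Ideal.span {tg F q} := by
  obtain ⟨k, rfl⟩ := gsurj q h
  rw [Ideal.mem_span_singleton]
  have := sub_dvd_pow_sub_pow
    (MonoidAlgebra.single (Multiplicative.ofAdd (1 : ZMod q)) (1:F)) 1 k
  simpa [MonoidAlgebra.single_pow, tg] using this

lemma aug_eq_span : augIdeal F (Multiplicative (ZMod q)) = Ideal.span {tg F q} := by
  apply le_antisymm
  · rw [augIdeal, Ideal.span_le]
    rintro x ⟨h, rfl⟩
    exact single_sub_one_mem F q h
  · rw [Ideal.span_le]
    rintro x rfl
    exact Ideal.subset_span ⟨_, rfl⟩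

lemma tg_pow_pred_ne : (tg F q) ^ (q - 1) ≠ 0 := by
  classical
  have hq : q - 1 + 1 = q := Nat.succ_pred_eq_of_pos (NeZero.pos q)
  have hneg : (-1 : MonoidAlgebra F (Multiplicative (ZMod q))) =
      MonoidAlgebra.single 1 (-1 : F) := by
    rw [MonoidAlgebra.one_def]
    exact (MonoidAlgebra.single_neg (1 : Multiplicative (ZMod q)) (1 : F)).symm
  have hexp : (tg F q) ^ (q - 1) =
      ∑ m ∈ Finset.range q, MonoidAlgebra.single
        ((Multiplicative.ofAdd (1 : ZMod q)) ^ m)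
        ((-1 : F) ^ (m + (q - 1)) * ((q - 1).choose m : F)) := by
    rw [tg, sub_pow, hq]
    refine Finset.sum_congr rfl fun m hm => ?_
    rw [one_pow, MonoidAlgebra.single_pow, one_pow, MonoidAlgebra.natCast_def, hneg,
      MonoidAlgebra.single_pow, one_pow]
    simp [MonoidAlgebra.single_mul_single]
  intro h0
  have hval : ((tg F q) ^ (q - 1)).coeff (1 : Multiplicative (ZMod q)) = (-1 : F) ^ (q - 1) := by
    rw [hexp, MonoidAlgebra.coeff_sum, Finsupp.finset_sum_apply]
    rw [Finset.sum_eq_single_of_mem 0 (Finset.mem_range.mpr (NeZero.pos q))]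
    · simp
    · intro b hb hb0
      have hg : (Multiplicative.ofAdd (1 : ZMod q)) ^ b ≠ 1 := by
        rw [gpow]
        intro hcon
        have : ((b : ZMod q)) = 0 := by
          have := congrArg Multiplicative.toAdd hcon
          simpa using this
        rw [ZMod.natCast_eq_zero_iff] at this
        have := Nat.le_of_dvd (Nat.pos_of_ne_zero hb0) this
        exact absurd (Finset.mem_range.mp hb) (not_lt.mpr this)
      rw [MonoidAlgebra.coeff_single, Finsupp.single_apply, if_neg hg]
  rw [h0] at hval
  simp only [MonoidAlgebra.coeff_zero, Finsupp.coe_zero, Pi.zero_apply] at hval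
  exact (pow_ne_zero _ (neg_ne_zero.mpr one_ne_zero)) hval.symm

lemma exists_scalar (c : MonoidAlgebra F (Multiplicative (ZMod q))) :
    ∃ a : F, c - a • 1 ∈ Ideal.span {tg F q} := by
  induction c using MonoidAlgebra.induction_linear with
  | zero => exact ⟨0, by simp⟩
  | add f g hf hg =>
      obtain ⟨a, ha⟩ := hf; obtain ⟨b, hb⟩ := hg
      refine ⟨a + b, ?_⟩
      have := Ideal.add_mem _ ha hb
      convert this using 1
      rw [add_smul]; ring
  | single h b =>
      refine ⟨b, ?_⟩
      have hb : (MonoidAlgebra.single h b : MonoidAlgebra F (Multiplicative (ZMod q)))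
          - b • 1 = b • (MonoidAlgebra.single h 1 - 1) := by
        rw [smul_sub, MonoidAlgebra.smul_single', mul_one]
      rw [hb, Algebra.smul_def]
      exact Ideal.mul_mem_left _ _ (single_sub_one_mem F q h)

lemma span_pow_eq (htq : (tg F q) ^ q = 0) (j : ℕ)
    (x : MonoidAlgebra F (Multiplicative (ZMod q)))
    (hx : x ∈ Ideal.span {(tg F q) ^ j}) (hx' : x ∉ Ideal.span {(tg F q) ^ (j + 1)}) :
    Ideal.span {x} = Ideal.span {(tg F q) ^ j} := by
  set t := tg F q with ht
  obtain ⟨c, rfl⟩ := Ideal.mem_span_singleton.mp hx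
  obtain ⟨a, hw⟩ := exists_scalar F q c
  obtain ⟨d, hd⟩ := Ideal.mem_span_singleton.mp hw
  have hc : c = a • 1 + t * d := by rw [← hd]; ring
  have ha : a ≠ 0 := by
    rintro rfl
    apply hx'
    rw [Ideal.mem_span_singleton, hc]
    exact ⟨d, by rw [zero_smul, zero_add]; ring⟩
  have hu : IsUnit (a • (1 : MonoidAlgebra F (Multiplicative (ZMod q))) + t * d) := by
    have h1 : IsUnit (a • (1 : MonoidAlgebra F (Multiplicative (ZMod q)))) := by
      rw [Algebra.smul_def, mul_one]
      exact ha.isUnit.map (algebraMap F _)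
    have h2 : IsNilpotent (t * d) := ⟨q, by rw [mul_pow, htq, zero_mul]⟩
    exact h2.isUnit_add_left_of_commute h1 (Commute.all _ _)
  rw [hc]
  exact Ideal.span_singleton_mul_right_unit hu _

end Aux

/-- For `F` a field of characteristic `p` and `G` cyclic of order `p^n`, every
ideal of the group algebra `F[G]` is a power of the augmentation ideal `I`;
in particular the ideals of `F[G]` are totally ordered:
`F[G] = I^0 ⊋ I ⊋ I^2 ⊋ ⋯ ⊋ I^{p^n} = 0`. -/
theorem ideals_powers_of_augmentation (p n : ℕ) (hp : p.Prime) [NeZero p]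
    (F : Type*) [Field F] [CharP F p] :
    (∀ J : Ideal (MonoidAlgebra F (Multiplicative (ZMod (p ^ n)))),
        ∃ j ≤ p ^ n, J = (augIdeal F (Multiplicative (ZMod (p ^ n)))) ^ j) ∧
      (∀ j < p ^ n,
        (augIdeal F (Multiplicative (ZMod (p ^ n)))) ^ (j + 1)
          < (augIdeal F (Multiplicative (ZMod (p ^ n)))) ^ j) ∧
      (augIdeal F (Multiplicative (ZMod (p ^ n)))) ^ (p ^ n) = ⊥ := by
  classical
  haveI : Fact p.Prime := ⟨hp⟩
  set q := p ^ n with hqdef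
  haveI : NeZero q := ⟨pow_ne_zero n hp.ne_zero⟩
  set t := tg F q with htdef
  set I := augIdeal F (Multiplicative (ZMod q)) with hIdef
  have hIj : ∀ j : ℕ, I ^ j = Ideal.span {t ^ j} := fun j => by
    rw [hIdef, aug_eq_span, Ideal.span_singleton_pow]
  -- t ^ q = 0
  haveI := charP_MA F q p
  have htq : t ^ q = 0 := by
    rw [htdef, tg, hqdef, sub_pow_char_pow, one_pow, MonoidAlgebra.single_pow, one_pow,
      gpow, ZMod.natCast_self]
    simp [MonoidAlgebra.one_def]
  have hbot : I ^ q = ⊥ := by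
    rw [hIj, htq, Ideal.span_singleton_eq_bot]
  refine ⟨?_, ?_, hbot⟩
  · -- classification of ideals
    intro J
    by_cases hJ : J = ⊥
    · exact ⟨q, le_rfl, by rw [hJ, hbot]⟩
    · set j := Nat.findGreatest (fun j => J ≤ I ^ j) q with hj
      have hJj : J ≤ I ^ j :=
        Nat.findGreatest_spec (P := fun j => J ≤ I ^ j) (Nat.zero_le q) (by show J ≤ I ^ 0; rw [pow_zero, Ideal.one_eq_top]; exact le_top)
      have hjle : j ≤ q := Nat.findGreatest_le q
      have hjq : j < q := by
        rcases lt_or_eq_of_le hjle with h | h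
        · exact h
        · exfalso; apply hJ
          rw [h] at hJj
          rw [hbot] at hJj
          exact le_bot_iff.mp hJj
      have hnot : ¬ J ≤ I ^ (j + 1) :=
        Nat.findGreatest_is_greatest (Nat.lt_succ_self j) hjq
      obtain ⟨x, hxJ, hxn⟩ := SetLike.not_le_iff_exists.mp hnot
      have hx : x ∈ Ideal.span {t ^ j} := by rw [← hIj]; exact hJj hxJ
      have hxn' : x ∉ Ideal.span {t ^ (j + 1)} := by rw [← hIj]; exact hxn
      have hspan := span_pow_eq F q htq j x hx hxn'
      refine ⟨j, le_of_lt hjq, le_antisymm ?_ ?_⟩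
      · rw [hIj]; exact hJj.trans (le_of_eq (hIj j))
      · rw [hIj, ← hspan]
        exact (Ideal.span_singleton_le_iff_mem _).mpr hxJ
  · -- strict chain
    intro j hjq
    refine lt_of_le_of_ne (Ideal.pow_le_pow_right (Nat.le_succ j)) ?_
    intro heq
    have htmem : t ^ j ∈ Ideal.span {t ^ (j + 1)} := by
      rw [← hIj, heq, hIj]
      exact Ideal.subset_span rfl
    obtain ⟨c, hc⟩ := Ideal.mem_span_singleton.mp htmem
    have hzero : t ^ (q - 1) = 0 := by
      have hsplit : q - 1 = j + (q - 1 - j) := by omega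
      have hsplit2 : (j + 1) + (q - 1 - j) = q := by omega
      calc t ^ (q - 1) = t ^ j * t ^ (q - 1 - j) := by rw [← pow_add, ← hsplit]
        _ = (t ^ (j + 1) * c) * t ^ (q - 1 - j) := by rw [← hc]
        _ = c * t ^ q := by
              rw [show t ^ q = t ^ (j + 1) * t ^ (q - 1 - j) by rw [← pow_add, hsplit2]]
              ring
        _ = 0 := by rw [htq, mul_zero]
    exact tg_pow_pred_ne F q hzero
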